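/- arXiv:1611.04531 — 6 statements merged into one kernel-verified Lean document; each statement's English description precedes it below -/
import Mathlib

section
/- Exponential decay for Hurwitz matrices. If a real n×n matrix A is Hurwitz, then there exist constants C > 0 and λ > 0 such that for all t ≥ 0 the operator norm of the matrix exponential satisfies ‖exp(tA)‖ ≤ C·exp(−λt). -/
open Matrix

namespace HurwitzAux

variable {n : ℕ}

lemma pow_mulVec_eig (M : Matrix (Fin n) (Fin n) ℂ) {μ : ℂ} {w : Fin n → ℂ}
    (h : M *ᵥ w = μ • w) (k : ℕ) : M ^ k *ᵥ w = μ ^ k • w := by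
  induction k with
  | zero => simp
  | succ k ih =>
      rw [pow_succ, ← Matrix.mulVec_mulVec, h, Matrix.mulVec_smul, ih, smul_smul, pow_succ,
        mul_comm]

lemma exp_mulVec_eig (M : Matrix (Fin n) (Fin n) ℂ) {μ : ℂ} {w : Fin n → ℂ}
    (h : M *ᵥ w = μ • w) : NormedSpace.exp M *ᵥ w = Complex.exp μ • w := by
  letI : SeminormedRing (Matrix (Fin n) (Fin n) ℂ) := Matrix.linftyOpSemiNormedRing
  letI : NormedRing (Matrix (Fin n) (Fin n) ℂ) := Matrix.linftyOpNormedRing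
  letI : NormedAlgebra ℂ (Matrix (Fin n) (Fin n) ℂ) := Matrix.linftyOpNormedAlgebra
  haveI : CompleteSpace (Matrix (Fin n) (Fin n) ℂ) :=
    FiniteDimensional.complete ℂ (Matrix (Fin n) (Fin n) ℂ)
  show NormedSpace.exp M *ᵥ w = Complex.exp μ • w
  let L : Matrix (Fin n) (Fin n) ℂ →ₗ[ℂ] (Fin n → ℂ) :=
    { toFun := fun N => N *ᵥ w
      map_add' := fun N₁ N₂ => Matrix.add_mulVec N₁ N₂ w
      map_smul' := fun c N => (Matrix.smul_mulVec c N w) }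
  let L' : Matrix (Fin n) (Fin n) ℂ →L[ℂ] (Fin n → ℂ) :=
    ⟨L, L.continuous_of_finiteDimensional⟩
  have hexp : NormedSpace.exp M = ∑' k : ℕ, ((Nat.factorial k : ℂ))⁻¹ • M ^ k :=
    congrFun (NormedSpace.exp_eq_tsum ℂ) M
  have hL : NormedSpace.exp M *ᵥ w = L' (∑' k : ℕ, ((Nat.factorial k : ℂ))⁻¹ • M ^ k) := by
    rw [← hexp]; rfl
  rw [hL, L'.map_tsum (NormedSpace.expSeries_summable' M)]
  have h1 : ∀ k : ℕ, L' (((Nat.factorial k : ℂ))⁻¹ • M ^ k)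
      = (((Nat.factorial k : ℂ))⁻¹ * μ ^ k) • w := by
    intro k
    rw [_root_.map_smul]
    show ((Nat.factorial k : ℂ))⁻¹ • (M ^ k *ᵥ w) = _
    rw [pow_mulVec_eig M h k, smul_smul]
  rw [tsum_congr h1, Summable.tsum_smul_const]
  · congr 1
    have h2 := congrFun (NormedSpace.exp_eq_tsum (𝕂 := ℂ) (𝔸 := ℂ)) μ
    rw [← Complex.exp_eq_exp_ℂ] at h2
    rw [h2]
    exact tsum_congr fun k => by simp [smul_eq_mul]
  · exact (NormedSpace.expSeries_summable' (𝕂 := ℂ) (𝔸 := ℂ) μ).congr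
      (fun k => by simp [smul_eq_mul])

lemma mem_spectrum_of_eig (M : Matrix (Fin n) (Fin n) ℂ) {μ : ℂ} {w : Fin n → ℂ}
    (hw : w ≠ 0) (h : M *ᵥ w = μ • w) : μ ∈ spectrum ℂ M := by
  rw [spectrum.mem_iff]
  intro hU
  rw [Matrix.isUnit_iff_isUnit_det, isUnit_iff_ne_zero] at hU
  apply hU
  rw [← Matrix.exists_mulVec_eq_zero_iff]
  refine ⟨w, hw, ?_⟩
  have halg : algebraMap ℂ (Matrix (Fin n) (Fin n) ℂ) μ = μ • (1 : Matrix (Fin n) (Fin n) ℂ) := by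
    simp [Algebra.algebraMap_eq_smul_one]
  rw [halg, Matrix.sub_mulVec, Matrix.smul_mulVec, Matrix.one_mulVec, h, sub_self]

lemma eig_of_mem_spectrum (M : Matrix (Fin n) (Fin n) ℂ) {μ : ℂ}
    (h : μ ∈ spectrum ℂ M) : ∃ w : Fin n → ℂ, w ≠ 0 ∧ M *ᵥ w = μ • w := by
  rw [spectrum.mem_iff, Matrix.isUnit_iff_isUnit_det, isUnit_iff_ne_zero, not_ne_iff,
    ← Matrix.exists_mulVec_eq_zero_iff] at h
  obtain ⟨w, hw, hw2⟩ := h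
  refine ⟨w, hw, ?_⟩
  have halg : algebraMap ℂ (Matrix (Fin n) (Fin n) ℂ) μ = μ • (1 : Matrix (Fin n) (Fin n) ℂ) := by
    simp [Algebra.algebraMap_eq_smul_one]
  rw [halg, Matrix.sub_mulVec, Matrix.smul_mulVec, Matrix.one_mulVec, sub_eq_zero] at hw2
  exact hw2.symm

lemma commute_exp (M : Matrix (Fin n) (Fin n) ℂ) :
    NormedSpace.exp M * M = M * NormedSpace.exp M := by
  letI : SeminormedRing (Matrix (Fin n) (Fin n) ℂ) := Matrix.linftyOpSemiNormedRing
  letI : NormedRing (Matrix (Fin n) (Fin n) ℂ) := Matrix.linftyOpNormedRing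
  letI : NormedAlgebra ℂ (Matrix (Fin n) (Fin n) ℂ) := Matrix.linftyOpNormedAlgebra
  haveI : CompleteSpace (Matrix (Fin n) (Fin n) ℂ) :=
    FiniteDimensional.complete ℂ (Matrix (Fin n) (Fin n) ℂ)
  exact ((Commute.refl M).exp_left).eq

lemma spectrum_exp_subset (M : Matrix (Fin n) (Fin n) ℂ) {ν : ℂ}
    (hν : ν ∈ spectrum ℂ (NormedSpace.exp M)) :
    ∃ μ ∈ spectrum ℂ M, ν = Complex.exp μ := by
  obtain ⟨v, hv, hv2⟩ := eig_of_mem_spectrum _ hν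
  set E := Module.End.eigenspace (Matrix.mulVecLin (NormedSpace.exp M)) ν with hE
  have memE : ∀ x : Fin n → ℂ, x ∈ E ↔ NormedSpace.exp M *ᵥ x = ν • x := by
    intro x
    rw [hE, Module.End.mem_eigenspace_iff]
    rfl
  have hvE : v ∈ E := (memE v).2 hv2
  haveI : Nontrivial E := by
    refine ⟨⟨v, hvE⟩, 0, ?_⟩
    simp only [ne_eq, Submodule.mk_eq_zero]
    exact hv
  have hinv : ∀ x ∈ E, M.mulVecLin x ∈ E := by
    intro x hx
    rw [memE] at hx ⊢
    show NormedSpace.exp M *ᵥ (M *ᵥ x) = ν • (M *ᵥ x)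
    rw [Matrix.mulVec_mulVec, commute_exp, ← Matrix.mulVec_mulVec, hx, Matrix.mulVec_smul]
  let f : Module.End ℂ E := (M.mulVecLin).restrict hinv
  obtain ⟨μ, hμ⟩ := Module.End.exists_eigenvalue f
  obtain ⟨w, hw⟩ := hμ.exists_hasEigenvector
  have hw0 : (w : Fin n → ℂ) ≠ 0 := fun h =>
    hw.right (Submodule.coe_eq_zero.mp h)
  have heig : M *ᵥ (w : Fin n → ℂ) = μ • (w : Fin n → ℂ) := by
    have h := Module.End.mem_eigenspace_iff.mp hw.left
    calc M *ᵥ (w : Fin n → ℂ) = M.mulVecLin (w : Fin n → ℂ) := rfl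
      _ = ((f w : E) : Fin n → ℂ) := (LinearMap.restrict_coe_apply _ _ _).symm
      _ = ((μ • w : E) : Fin n → ℂ) := by rw [h]
      _ = μ • (w : Fin n → ℂ) := rfl
  refine ⟨μ, mem_spectrum_of_eig M hw0 heig, ?_⟩
  have h1 := exp_mulVec_eig M heig
  have h2 : NormedSpace.exp M *ᵥ (w : Fin n → ℂ) = ν • (w : Fin n → ℂ) :=
    (memE _).1 w.2
  have h3 := h1.symm.trans h2
  rcases smul_eq_zero.mp
      (by rw [sub_smul, h3, sub_self] :
        (ν - Complex.exp μ) • (w : Fin n → ℂ) = 0) with h | h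
  · exact sub_eq_zero.mp h
  · exact absurd h hw0

lemma norm_coe_vec (v : Fin n → ℝ) :
    ‖((WithLp.equiv 2 (Fin n → ℂ)).symm (fun i => (v i : ℂ)) : EuclideanSpace ℂ (Fin n))‖
      = ‖((WithLp.equiv 2 (Fin n → ℝ)).symm v : EuclideanSpace ℝ (Fin n))‖ := by
  rw [EuclideanSpace.norm_eq, EuclideanSpace.norm_eq]
  congr 1
  refine Finset.sum_congr rfl fun i _ => ?_
  simp [Complex.norm_real]

lemma real_norm_le (M : Matrix (Fin n) (Fin n) ℝ) :
    ‖toEuclideanCLM (𝕜 := ℝ) M‖ ≤ ‖toEuclideanCLM (𝕜 := ℂ) (M.map Complex.ofReal)‖ := by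
  refine ContinuousLinearMap.opNorm_le_bound _ (norm_nonneg _) fun x => ?_
  set v : Fin n → ℝ := WithLp.equiv 2 (Fin n → ℝ) x with hv
  have hx : x = (WithLp.equiv 2 (Fin n → ℝ)).symm v := rfl
  set y : EuclideanSpace ℂ (Fin n) := (WithLp.equiv 2 (Fin n → ℂ)).symm (fun i => (v i : ℂ))
    with hy
  have hyx : ‖y‖ = ‖x‖ := by rw [hy, hx]; exact norm_coe_vec v
  have hMv : (M.map Complex.ofReal) *ᵥ (fun i => (v i : ℂ)) = fun j => ((M *ᵥ v) j : ℂ) := by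
    funext j
    simp only [Matrix.mulVec, dotProduct, Matrix.map_apply]
    push_cast
    rfl
  have happ : toEuclideanCLM (𝕜 := ℂ) (M.map Complex.ofReal) y
      = (WithLp.equiv 2 (Fin n → ℂ)).symm (fun j => (((M *ᵥ v) j : ℝ) : ℂ)) := by
    rw [hy, ← hMv]
    rfl
  have happ2 : toEuclideanCLM (𝕜 := ℝ) M x
      = (WithLp.equiv 2 (Fin n → ℝ)).symm (M *ᵥ v) := by
    rw [hx]
    rfl
  have hfin : ‖toEuclideanCLM (𝕜 := ℝ) M x‖
      = ‖toEuclideanCLM (𝕜 := ℂ) (M.map Complex.ofReal) y‖ := by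
    rw [happ, happ2, norm_coe_vec]
  rw [hfin, ← hyx]
  exact (toEuclideanCLM (𝕜 := ℂ) (M.map Complex.ofReal)).le_opNorm y

lemma map_exp_ofReal (M : Matrix (Fin n) (Fin n) ℝ) :
    (NormedSpace.exp M).map Complex.ofReal = NormedSpace.exp (M.map Complex.ofReal) := by
  letI : SeminormedRing (Matrix (Fin n) (Fin n) ℝ) := Matrix.linftyOpSemiNormedRing
  letI : NormedRing (Matrix (Fin n) (Fin n) ℝ) := Matrix.linftyOpNormedRing
  letI : NormedAlgebra ℝ (Matrix (Fin n) (Fin n) ℝ) := Matrix.linftyOpNormedAlgebra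
  letI : NormedAlgebra ℚ (Matrix (Fin n) (Fin n) ℝ) := Matrix.linftyOpNormedAlgebra
  letI : SeminormedRing (Matrix (Fin n) (Fin n) ℂ) := Matrix.linftyOpSemiNormedRing
  letI : NormedRing (Matrix (Fin n) (Fin n) ℂ) := Matrix.linftyOpNormedRing
  letI : NormedAlgebra ℝ (Matrix (Fin n) (Fin n) ℂ) := Matrix.linftyOpNormedAlgebra
  letI : NormedAlgebra ℂ (Matrix (Fin n) (Fin n) ℂ) := Matrix.linftyOpNormedAlgebra
  haveI : CompleteSpace (Matrix (Fin n) (Fin n) ℝ) :=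
    FiniteDimensional.complete ℝ (Matrix (Fin n) (Fin n) ℝ)
  haveI : CompleteSpace (Matrix (Fin n) (Fin n) ℂ) :=
    FiniteDimensional.complete ℂ (Matrix (Fin n) (Fin n) ℂ)
  show (NormedSpace.exp M).map Complex.ofReal = NormedSpace.exp (M.map Complex.ofReal)
  have hcont : Continuous fun N : Matrix (Fin n) (Fin n) ℝ => N.map Complex.ofReal := by
    let L : Matrix (Fin n) (Fin n) ℝ →ₗ[ℝ] Matrix (Fin n) (Fin n) ℂ :=
      { toFun := fun N => N.map Complex.ofReal
        map_add' := fun N₁ N₂ => by ext i j; simp [Matrix.map_apply]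
        map_smul' := fun r N => by
          ext i j
          simp [Matrix.map_apply, Complex.real_smul] }
    exact L.continuous_of_finiteDimensional
  have h1 : (NormedSpace.exp M).map Complex.ofReal
      = NormedSpace.exp (M.map Complex.ofReal) :=
    NormedSpace.map_exp (Complex.ofRealHom.mapMatrix :
      Matrix (Fin n) (Fin n) ℝ →+* Matrix (Fin n) (Fin n) ℂ) hcont M
  rw [h1]

set_option synthInstance.maxHeartbeats 1000000 in
lemma pow_norm_decay (hn : 0 < n) (B : Matrix (Fin n) (Fin n) ℂ) {r : ℝ} (hr0 : 0 < r)
    (h : spectralRadius ℂ (toEuclideanCLM (𝕜 := ℂ) B) < ENNReal.ofReal r) :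
    ∃ C > 0, ∀ k : ℕ, ‖toEuclideanCLM (𝕜 := ℂ) (B ^ k)‖ ≤ C * r ^ k := by
  haveI : Nonempty (Fin n) := Fin.pos_iff_nonempty.mp hn
  set D := toEuclideanCLM (𝕜 := ℂ) B with hD
  have hDk : ∀ k : ℕ, toEuclideanCLM (𝕜 := ℂ) (B ^ k) = D ^ k := fun k => map_pow _ B k
  have hG := spectrum.pow_nnnorm_pow_one_div_tendsto_nhds_spectralRadius D
  have hev : ∀ᶠ k : ℕ in Filter.atTop,
      (‖D ^ k‖₊ : ENNReal) ^ (1 / (k : ℝ)) < ENNReal.ofReal r :=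
    hG.eventually_lt_const h
  obtain ⟨K, hK⟩ := Filter.eventually_atTop.mp (hev.and (Filter.eventually_ge_atTop 1))
  have hbig : ∀ k, K ≤ k → ‖D ^ k‖ ≤ r ^ k := by
    intro k hk
    obtain ⟨h1, h2⟩ := hK k hk
    have hkpos : (0 : ℝ) < (k : ℝ) := by exact_mod_cast h2
    have h3 := ENNReal.rpow_lt_rpow h1 hkpos
    rw [← ENNReal.rpow_mul, one_div, inv_mul_cancel₀ (ne_of_gt hkpos), ENNReal.rpow_one] at h3
    rw [ENNReal.ofReal_rpow_of_pos hr0, Real.rpow_natCast,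
      ← enorm_eq_nnnorm, ← ofReal_norm] at h3
    exact (ENNReal.ofReal_lt_ofReal_iff_of_nonneg (norm_nonneg _)).mp h3 |>.le
  have hsum : (0:ℝ) ≤ ∑ j ∈ Finset.range K, ‖D ^ j‖ / r ^ j :=
    Finset.sum_nonneg fun j _ => by positivity
  refine ⟨(∑ j ∈ Finset.range K, ‖D ^ j‖ / r ^ j) + 1, by linarith, fun k => ?_⟩
  rw [hDk k]
  by_cases hk : k < K
  · have h1 : ‖D ^ k‖ / r ^ k ≤ ∑ j ∈ Finset.range K, ‖D ^ j‖ / r ^ j :=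
      Finset.single_le_sum (f := fun j => ‖D ^ j‖ / r ^ j)
        (fun j _ => by positivity) (Finset.mem_range.mpr hk)
    have h2 : ‖D ^ k‖ = (‖D ^ k‖ / r ^ k) * r ^ k := by field_simp
    rw [h2]
    have hrk : (0:ℝ) ≤ r ^ k := by positivity
    exact mul_le_mul_of_nonneg_right (by linarith) hrk
  · have h1 : ‖D ^ k‖ ≤ r ^ k := hbig k (le_of_not_gt hk)
    have hrk : (0:ℝ) ≤ r ^ k := by positivity
    nlinarith

lemma remainder_bound (A' : Matrix (Fin n) (Fin n) ℂ) :
    ∃ K : ℝ, ∀ s ∈ Set.Icc (0:ℝ) 1,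
      ‖toEuclideanCLM (𝕜 := ℂ) (NormedSpace.exp (s • A'))‖ ≤ K := by
  letI : SeminormedRing (Matrix (Fin n) (Fin n) ℂ) := Matrix.linftyOpSemiNormedRing
  letI : NormedRing (Matrix (Fin n) (Fin n) ℂ) := Matrix.linftyOpNormedRing
  letI : NormedAlgebra ℂ (Matrix (Fin n) (Fin n) ℂ) := Matrix.linftyOpNormedAlgebra
  letI : NormedAlgebra ℚ (Matrix (Fin n) (Fin n) ℂ) := Matrix.linftyOpNormedAlgebra
  haveI : CompleteSpace (Matrix (Fin n) (Fin n) ℂ) :=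
    FiniteDimensional.complete ℂ (Matrix (Fin n) (Fin n) ℂ)
  have hCLM : Continuous fun M : Matrix (Fin n) (Fin n) ℂ => toEuclideanCLM (𝕜 := ℂ) M := by
    let L : Matrix (Fin n) (Fin n) ℂ →ₗ[ℂ]
        (EuclideanSpace ℂ (Fin n) →L[ℂ] EuclideanSpace ℂ (Fin n)) :=
      { toFun := fun M => toEuclideanCLM (𝕜 := ℂ) M
        map_add' := fun M₁ M₂ => map_add _ M₁ M₂
        map_smul' := fun c M => map_smul (toEuclideanCLM (n := Fin n) (𝕜 := ℂ)) c M }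
    exact L.continuous_of_finiteDimensional
  have hcont : Continuous fun s : ℝ =>
      toEuclideanCLM (𝕜 := ℂ) (NormedSpace.exp (s • A')) :=
    hCLM.comp (NormedSpace.exp_continuous.comp (continuous_id.smul continuous_const))
  exact isCompact_Icc.exists_bound_of_continuousOn hcont.continuousOn

end HurwitzAux

/-- A real square matrix is Hurwitz if every complex eigenvalue has negative real part. -/
def IsHurwitz {n : Type*} [Fintype n] [DecidableEq n] (M : Matrix n n ℝ) : Prop :=
  ∀ μ ∈ spectrum ℂ (M.map (Complex.ofReal)), μ.re < 0

/-- **Exponential decay for Hurwitz matrices.** If `A` is Hurwitz then the (Euclidean)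
operator norm of `exp(tA)` decays exponentially: there are `C > 0` and `λ > 0` with
`‖exp(tA)‖ ≤ C·exp(−λt)` for all `t ≥ 0`. -/
theorem hurwitz_exp_decay {n : ℕ} (A : Matrix (Fin n) (Fin n) ℝ) (hA : IsHurwitz A) :
    ∃ C > (0 : ℝ), ∃ lam > (0 : ℝ), ∀ t : ℝ, 0 ≤ t →
      ‖Matrix.toEuclideanCLM (𝕜 := ℝ) (NormedSpace.exp (t • A))‖
        ≤ C * Real.exp (-lam * t) := by
  classical
  rcases Nat.eq_zero_or_pos n with hn | hn
  · subst hn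
    refine ⟨1, one_pos, 1, one_pos, fun t ht => ?_⟩
    have h0 : Matrix.toEuclideanCLM (𝕜 := ℝ) (NormedSpace.exp (t • A)) = 0 := by
      ext x i
      exact i.elim0
    rw [h0, norm_zero, one_mul]
    positivity
  haveI : Nonempty (Fin n) := Fin.pos_iff_nonempty.mp hn
  set A' : Matrix (Fin n) (Fin n) ℂ := A.map Complex.ofReal with hA'
  -- the spectrum of `A'` is nonempty and compact
  have hspec_ne : (spectrum ℂ A').Nonempty := by
    obtain ⟨μ, hμ⟩ := Module.End.exists_eigenvalue (Matrix.mulVecLin A')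
    obtain ⟨w, hw⟩ := hμ.exists_hasEigenvector
    exact ⟨μ, HurwitzAux.mem_spectrum_of_eig A' hw.right
      (Module.End.mem_eigenspace_iff.mp hw.left)⟩
  have hspec_eq : spectrum ℂ (toEuclideanCLM (𝕜 := ℂ) A') = spectrum ℂ A' :=
    AlgEquiv.spectrum_eq (toEuclideanCLM (n := Fin n) (𝕜 := ℂ)) A'
  have hspec_cpt : IsCompact (spectrum ℂ A') := by
    rw [← hspec_eq]
    exact spectrum.isCompact _
  obtain ⟨μ₀, hμ₀mem, hμ₀max⟩ :=
    hspec_cpt.exists_isMaxOn hspec_ne (Complex.continuous_re.continuousOn)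
  have ha : μ₀.re < 0 := hA μ₀ hμ₀mem
  set r : ℝ := Real.exp (μ₀.re / 2) with hr
  have hr0 : 0 < r := Real.exp_pos _
  have hr1 : r < 1 := by
    rw [hr, Real.exp_lt_one_iff]
    linarith
  -- bound the spectral radius of `exp A'`
  have hspec_eq2 : spectrum ℂ (toEuclideanCLM (𝕜 := ℂ) (NormedSpace.exp A'))
      = spectrum ℂ (NormedSpace.exp A') :=
    AlgEquiv.spectrum_eq (toEuclideanCLM (n := Fin n) (𝕜 := ℂ)) _
  have hsr : spectralRadius ℂ (toEuclideanCLM (𝕜 := ℂ) (NormedSpace.exp A'))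
      < ENNReal.ofReal r := by
    have hb : ∀ ν ∈ spectrum ℂ (toEuclideanCLM (𝕜 := ℂ) (NormedSpace.exp A')),
        (‖ν‖₊ : ENNReal) ≤ ENNReal.ofReal (Real.exp μ₀.re) := by
      intro ν hν
      rw [hspec_eq2] at hν
      obtain ⟨μ, hμ, rfl⟩ := HurwitzAux.spectrum_exp_subset A' hν
      rw [← enorm_eq_nnnorm, ← ofReal_norm]
      apply ENNReal.ofReal_le_ofReal
      rw [Complex.norm_exp]
      exact Real.exp_le_exp.mpr (hμ₀max hμ)
    calc spectralRadius ℂ (toEuclideanCLM (𝕜 := ℂ) (NormedSpace.exp A'))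
        ≤ ENNReal.ofReal (Real.exp μ₀.re) := iSup₂_le hb
      _ < ENNReal.ofReal r := by
          rw [ENNReal.ofReal_lt_ofReal_iff hr0]
          exact Real.exp_lt_exp.mpr (by linarith)
  obtain ⟨C₁, hC₁, hpow⟩ := HurwitzAux.pow_norm_decay hn (NormedSpace.exp A') hr0 hsr
  obtain ⟨K, hK⟩ := HurwitzAux.remainder_bound (n := n) A'
  have hK0 : 0 ≤ K := le_trans (norm_nonneg _) (hK 0 ⟨le_refl _, zero_le_one⟩)
  set lam : ℝ := -Real.log r with hlamdef
  have hlam : 0 < lam := by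
    rw [hlamdef, neg_pos]
    exact Real.log_neg hr0 hr1
  refine ⟨C₁ * (K + 1) * Real.exp lam, by positivity, lam, hlam, fun t ht => ?_⟩
  set k : ℕ := ⌊t⌋₊ with hk
  set s : ℝ := t - k with hs
  have hs0 : 0 ≤ s := by
    rw [hs]
    have := Nat.floor_le ht
    linarith
  have hs1 : s ≤ 1 := by
    rw [hs]
    have := (Nat.lt_floor_add_one t).le
    linarith
  have hmap : (t • A).map Complex.ofReal = t • A' := by
    rw [hA']
    exact Matrix.map_smul Complex.ofReal t (fun a => by simp [Complex.real_smul]) A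
  have e1 : ‖Matrix.toEuclideanCLM (𝕜 := ℝ) (NormedSpace.exp (t • A))‖
      ≤ ‖toEuclideanCLM (𝕜 := ℂ) (NormedSpace.exp (t • A'))‖ := by
    have h := HurwitzAux.real_norm_le (NormedSpace.exp (t • A))
    rwa [HurwitzAux.map_exp_ofReal, hmap] at h
  have hsplit : NormedSpace.exp (t • A')
      = NormedSpace.exp A' ^ k * NormedSpace.exp (s • A') := by
    have ht' : t • A' = (k : ℝ) • A' + s • A' := by
      rw [← add_smul]
      congr 1
      rw [hs]
      ring
    rw [ht', Matrix.exp_add_of_commute _ _ (((Commute.refl A').smul_left ((k : ℝ))).smul_right s)]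
    congr 1
    rw [show ((k : ℝ) • A') = (k • A' : Matrix (Fin n) (Fin n) ℂ) from
      (Nat.cast_smul_eq_nsmul ℝ k A'), Matrix.exp_nsmul]
  have e2 : ‖toEuclideanCLM (𝕜 := ℂ) (NormedSpace.exp (t • A'))‖
      ≤ (C₁ * r ^ k) * (K + 1) := by
    rw [hsplit, _root_.map_mul]
    have hm := norm_mul_le (toEuclideanCLM (𝕜 := ℂ) (NormedSpace.exp A' ^ k))
      (toEuclideanCLM (𝕜 := ℂ) (NormedSpace.exp (s • A')))
    have h1 := hpow k
    have h2 : ‖toEuclideanCLM (𝕜 := ℂ) (NormedSpace.exp (s • A'))‖ ≤ K + 1 := by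
      have := hK s ⟨hs0, hs1⟩
      linarith
    calc ‖toEuclideanCLM (𝕜 := ℂ) (NormedSpace.exp A' ^ k)
          * toEuclideanCLM (𝕜 := ℂ) (NormedSpace.exp (s • A'))‖
        ≤ ‖toEuclideanCLM (𝕜 := ℂ) (NormedSpace.exp A' ^ k)‖
          * ‖toEuclideanCLM (𝕜 := ℂ) (NormedSpace.exp (s • A'))‖ := hm
      _ ≤ (C₁ * r ^ k) * (K + 1) := by
          apply mul_le_mul h1 h2 (norm_nonneg _)
          positivity
  have e3 : r ^ k ≤ Real.exp (-lam * t) * Real.exp lam := by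
    have hrk : r ^ k = Real.exp (-lam * k) := by
      rw [hlamdef, neg_neg, mul_comm, Real.exp_nat_mul, Real.exp_log hr0]
    rw [hrk, ← Real.exp_add]
    apply Real.exp_le_exp.mpr
    have hts : (k : ℝ) = t - s := by rw [hs]; ring
    rw [hts]
    nlinarith [hlam, hs1, hs0]
  have e4 : (C₁ * r ^ k) * (K + 1) ≤ (C₁ * (Real.exp (-lam * t) * Real.exp lam)) * (K + 1) := by
    have := mul_le_mul_of_nonneg_left e3 hC₁.le
    exact mul_le_mul_of_nonneg_right this (by positivity)
  calc ‖Matrix.toEuclideanCLM (𝕜 := ℝ) (NormedSpace.exp (t • A))‖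
      ≤ ‖toEuclideanCLM (𝕜 := ℂ) (NormedSpace.exp (t • A'))‖ := e1
    _ ≤ (C₁ * r ^ k) * (K + 1) := e2
    _ ≤ (C₁ * (Real.exp (-lam * t) * Real.exp lam)) * (K + 1) := e4
    _ = C₁ * (K + 1) * Real.exp lam * Real.exp (-lam * t) := by ring
end

section
/- Stability part of Theorem 1. Suppose the block matrix A = [[A₁, L₁Γ₂],[L₂Γ₁, A₂]] is Hurwitz, and let K₁ be any real m₁×p₁ matrix such that A₁ + B₁K₁C₁ is Hurwitz. Then the (2n₁+n₂)×(2n₁+n₂) closed-loop matrix of the preexisting system with the retrofit controller Π₁ (consisting of the localizing compensator x̂₁' = A₁x̂₁ + L₁Γ₂x₂ and the feedback u₁ = K₁(C₁x₁ − C₁x̂₁)), namely the block matrix (with state ordering (x₁, x₂, x̂₁)) M_cl = [[A₁+B₁K₁C₁, L₁Γ₂, −B₁K₁C₁],[L₂Γ₁, A₂, 0],[0, L₁Γ₂, A₁]], is Hurwitz. -/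
open Matrix

lemma mem_spectrum_iff_det {n : Type*} [Fintype n] [DecidableEq n]
    (M : Matrix n n ℂ) (μ : ℂ) :
    μ ∈ spectrum ℂ M ↔ (μ • (1 : Matrix n n ℂ) - M).det = 0 := by
  rw [spectrum.mem_iff, Algebra.algebraMap_eq_smul_one, Matrix.isUnit_iff_isUnit_det,
    isUnit_iff_ne_zero, not_not]

lemma smul_one_sub_fromBlocks {α β : Type*} [DecidableEq α] [DecidableEq β]
    [Fintype α] [Fintype β]
    (z : ℂ) (A : Matrix α α ℂ) (B : Matrix α β ℂ) (C : Matrix β α ℂ) (D : Matrix β β ℂ) :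
    z • (1 : Matrix (α ⊕ β) (α ⊕ β) ℂ) - fromBlocks A B C D =
      fromBlocks (z • 1 - A) (-B) (-C) (z • 1 - D) := by
  rw [← fromBlocks_one, fromBlocks_smul, sub_eq_add_neg, fromBlocks_neg, fromBlocks_add]
  simp [sub_eq_add_neg]

lemma add_fromColumns {m n₁ n₂ : Type*} (A₁ B₁ : Matrix m n₁ ℂ) (A₂ B₂ : Matrix m n₂ ℂ) :
    fromCols A₁ A₂ + fromCols B₁ B₂ = fromCols (A₁ + B₁) (A₂ + B₂) := by
  ext i (j | j) <;> simp

lemma aux_det {N₁ N₂ : Type*} [Fintype N₁] [Fintype N₂] [DecidableEq N₁] [DecidableEq N₂]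
    (z : ℂ) (a1 bkc : Matrix N₁ N₁ ℂ) (u : Matrix N₁ N₂ ℂ) (v : Matrix N₂ N₁ ℂ)
    (a2 : Matrix N₂ N₂ ℂ) :
    (z • (1 : Matrix (N₁ ⊕ (N₂ ⊕ N₁)) (N₁ ⊕ (N₂ ⊕ N₁)) ℂ) -
        fromBlocks (a1 + bkc) (fromCols u (-bkc)) (fromRows v 0)
          (fromBlocks a2 0 u a1)).det
      = (z • 1 - (a1 + bkc)).det * (z • 1 - fromBlocks a1 u v a2).det := by
  set S : Matrix (N₁ ⊕ (N₂ ⊕ N₁)) (N₁ ⊕ (N₂ ⊕ N₁)) ℂ :=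
    fromBlocks 1 (fromCols 0 (-1)) 0 1 with hS
  set T : Matrix (N₁ ⊕ (N₂ ⊕ N₁)) (N₁ ⊕ (N₂ ⊕ N₁)) ℂ :=
    fromBlocks 1 (fromCols 0 1) 0 1 with hT
  have hdS : S.det = 1 := by rw [hS, det_fromBlocks_zero₂₁]; simp
  have hdT : T.det = 1 := by rw [hT, det_fromBlocks_zero₂₁]; simp
  set X : Matrix (N₁ ⊕ (N₂ ⊕ N₁)) (N₁ ⊕ (N₂ ⊕ N₁)) ℂ :=
    z • (1 : Matrix (N₁ ⊕ (N₂ ⊕ N₁)) (N₁ ⊕ (N₂ ⊕ N₁)) ℂ) -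
      fromBlocks (a1 + bkc) (fromCols u (-bkc)) (fromRows v 0)
        (fromBlocks a2 0 u a1) with hXdef
  have hX : X = fromBlocks (z • 1 - (a1 + bkc)) (fromCols (-u) bkc) (fromRows (-v) 0)
      (fromBlocks (z • 1 - a2) 0 (-u) (z • 1 - a1)) := by
    rw [hXdef, smul_one_sub_fromBlocks, smul_one_sub_fromBlocks]
    simp
  have hprod : S * X * T =
      fromBlocks (z • 1 - (a1 + bkc)) 0 (fromRows (-v) 0)
        (fromBlocks (z • 1 - a2) (-v) (-u) (z • 1 - a1)) := by
    rw [hX, hS, hT, fromBlocks_multiply, fromBlocks_multiply]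
    simp only [Matrix.one_mul, Matrix.mul_one, Matrix.zero_mul, Matrix.mul_zero,
      Matrix.neg_mul, Matrix.mul_neg, add_zero, zero_add, neg_neg, neg_zero,
      fromCols_mul_fromRows, fromCols_mul_fromBlocks, fromRows_mul,
      mul_fromCols, fromRows_mul_fromCols, add_fromColumns,
      fromRows_fromCols_eq_fromBlocks]
    have h1 : fromCols (0 : Matrix (N₂ ⊕ N₁) N₂ ℂ) (fromRows (-v) 0) =
        fromBlocks 0 (-v) 0 0 := by
      ext (i | i) (j | j) <;> simp
    have h2 : z • (1 : Matrix N₁ N₁ ℂ) - (a1 + bkc) + (bkc + -(z • 1 - a1)) = 0 := by abel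
    have h3 : z • (1 : Matrix N₁ N₁ ℂ) - (a1 + bkc) + (bkc + (a1 - z • 1)) = 0 := by abel
    rw [h1, fromBlocks_add]
    simp [h3]
  have hdet : X.det = (S * X * T).det := by
    rw [Matrix.det_mul, Matrix.det_mul, hdS, hdT, one_mul, mul_one]
  rw [hdet, hprod, det_fromBlocks_zero₁₂]
  congr 1
  have hswap : fromBlocks (z • 1 - a2) (-v) (-u) (z • 1 - a1) =
      (fromBlocks (z • 1 - a1) (-u) (-v) (z • 1 - a2)).submatrix
        (Equiv.sumComm N₂ N₁) (Equiv.sumComm N₂ N₁) := by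
    ext (i | i) (j | j) <;> rfl
  rw [hswap, Matrix.det_submatrix_equiv_self, ← smul_one_sub_fromBlocks]

/-- **Stability part of Theorem 1.** If the preexisting system matrix `A` is Hurwitz and
`A₁ + B₁K₁C₁` is Hurwitz, then the closed-loop matrix of the preexisting system with the
retrofit controller `Π₁` (state ordering `(x₁, x₂, x̂₁)`) is Hurwitz. -/
theorem retrofit_closed_loop_stability
    {n₁ n₂ m₁ m₂ q p₁ : ℕ}
    (A₁ : Matrix (Fin n₁) (Fin n₁) ℝ) (L₁ : Matrix (Fin n₁) (Fin m₂) ℝ)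
    (B₁ : Matrix (Fin n₁) (Fin m₁) ℝ) (C₁ : Matrix (Fin p₁) (Fin n₁) ℝ)
    (A₂ : Matrix (Fin n₂) (Fin n₂) ℝ) (L₂ : Matrix (Fin n₂) (Fin q) ℝ)
    (Γ₁ : Matrix (Fin q) (Fin n₁) ℝ) (Γ₂ : Matrix (Fin m₂) (Fin n₂) ℝ)
    (K₁ : Matrix (Fin m₁) (Fin p₁) ℝ)
    (hA : IsHurwitz (fromBlocks A₁ (L₁ * Γ₂) (L₂ * Γ₁) A₂))
    (hK : IsHurwitz (A₁ + B₁ * K₁ * C₁)) :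
    IsHurwitz
      (fromBlocks (A₁ + B₁ * K₁ * C₁) (fromCols (L₁ * Γ₂) (-(B₁ * K₁ * C₁)))
        (fromRows (L₂ * Γ₁) (0 : Matrix (Fin n₁) (Fin n₁) ℝ))
        (fromBlocks A₂ (0 : Matrix (Fin n₂) (Fin n₁) ℝ) (L₁ * Γ₂) A₁)) := by
  intro μ hμ
  set a1 := A₁.map Complex.ofReal
  set bkc := (B₁ * K₁ * C₁).map Complex.ofReal
  set u := (L₁ * Γ₂).map Complex.ofReal
  set v := (L₂ * Γ₁).map Complex.ofReal
  set a2 := A₂.map Complex.ofReal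
  have hmap : (fromBlocks (A₁ + B₁ * K₁ * C₁) (fromCols (L₁ * Γ₂) (-(B₁ * K₁ * C₁)))
        (fromRows (L₂ * Γ₁) (0 : Matrix (Fin n₁) (Fin n₁) ℝ))
        (fromBlocks A₂ (0 : Matrix (Fin n₂) (Fin n₁) ℝ) (L₁ * Γ₂) A₁)).map Complex.ofReal
      = fromBlocks (a1 + bkc) (fromCols u (-bkc)) (fromRows v 0)
          (fromBlocks a2 0 u a1) := by
    ext (i | i | i) (j | j | j) <;>
      simp [a1, bkc, u, v, a2, Matrix.map_apply, fromRows_apply_inl, fromRows_apply_inr, fromCols]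
  have hmapK : (A₁ + B₁ * K₁ * C₁).map Complex.ofReal = a1 + bkc := by
    ext i j; simp [a1, bkc, Matrix.map_apply]
  have hmapA : (fromBlocks A₁ (L₁ * Γ₂) (L₂ * Γ₁) A₂).map Complex.ofReal
      = fromBlocks a1 u v a2 := by
    ext (i | i) (j | j) <;> simp [a1, u, v, a2, Matrix.map_apply]
  rw [hmap, mem_spectrum_iff_det, aux_det] at hμ
  rcases mul_eq_zero.mp hμ with h | h
  · exact hK μ (by rw [hmapK, mem_spectrum_iff_det]; exact h)
  · exact hA μ (by rw [hmapA, mem_spectrum_iff_det]; exact h)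
end

section
/- Parameterized hierarchical state-space expansion (Lemma 3). Let P₁ be a real n₁×n̂₁ matrix and P₁† a real n̂₁×n₁ matrix with P₁†P₁ = I, and let P̄₁ (n₁×(n₁−n̂₁)) and P̄₁† ((n₁−n̂₁)×n₁) satisfy P₁P₁† + P̄₁P̄₁† = I. Assume the column space of B₁ is contained in the column space of P₁. Let u₁ : ℝ → ℝ^{m₁} be continuous, let ξ̂₁ : ℝ → ℝ^{n̂₁} be differentiable with ξ̂₁'(t) = P₁†A₁P₁ξ̂₁(t) + P₁†B₁u₁(t), and let ξ₁ : ℝ → ℝ^{n₁}, ξ₂ : ℝ → ℝ^{n₂} be differentiable with ξ₁'(t) = A₁ξ₁(t) + L₁Γ₂ξ₂(t) + P̄₁P̄₁†A₁P₁ξ̂₁(t) and ξ₂'(t) = L₂Γ₁(ξ₁(t) + P₁ξ̂₁(t)) + A₂ξ₂(t) for all t. Then x₁ := ξ₁ + P₁ξ̂₁ and x₂ := ξ₂ satisfy x₁'(t) = A₁x₁(t) + L₁Γ₂x₂(t) + B₁u₁(t) and x₂'(t) = L₂Γ₁x₁(t) + A₂x₂(t) for all t. -/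
open Matrix

/-- **Parameterized hierarchical state-space expansion (Lemma 3).** -/
theorem parameterized_hierarchical_expansion
    {n₁ n₂ nh₁ m₁ m₂ q : ℕ}
    (A₁ : Matrix (Fin n₁) (Fin n₁) ℝ) (L₁ : Matrix (Fin n₁) (Fin m₂) ℝ)
    (B₁ : Matrix (Fin n₁) (Fin m₁) ℝ) (A₂ : Matrix (Fin n₂) (Fin n₂) ℝ)
    (L₂ : Matrix (Fin n₂) (Fin q) ℝ) (Γ₁ : Matrix (Fin q) (Fin n₁) ℝ)
    (Γ₂ : Matrix (Fin m₂) (Fin n₂) ℝ)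
    (P₁ : Matrix (Fin n₁) (Fin nh₁) ℝ) (P₁d : Matrix (Fin nh₁) (Fin n₁) ℝ)
    (Pb₁ : Matrix (Fin n₁) (Fin (n₁ - nh₁)) ℝ) (Pb₁d : Matrix (Fin (n₁ - nh₁)) (Fin n₁) ℝ)
    (hleft : P₁d * P₁ = 1)
    (hproj : P₁ * P₁d + Pb₁ * Pb₁d = 1)
    (hB : LinearMap.range B₁.mulVecLin ≤ LinearMap.range P₁.mulVecLin)
    (u₁ : ℝ → Fin m₁ → ℝ) (hu : Continuous u₁)
    (ξh₁ : ℝ → Fin nh₁ → ℝ) (ξ₁ : ℝ → Fin n₁ → ℝ) (ξ₂ : ℝ → Fin n₂ → ℝ)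
    (hup : ∀ t : ℝ, HasDerivAt ξh₁
      ((P₁d * A₁ * P₁).mulVec (ξh₁ t) + (P₁d * B₁).mulVec (u₁ t)) t)
    (hdn₁ : ∀ t : ℝ, HasDerivAt ξ₁
      (A₁.mulVec (ξ₁ t) + (L₁ * Γ₂).mulVec (ξ₂ t)
        + (Pb₁ * Pb₁d * A₁ * P₁).mulVec (ξh₁ t)) t)
    (hdn₂ : ∀ t : ℝ, HasDerivAt ξ₂
      ((L₂ * Γ₁).mulVec (ξ₁ t + P₁.mulVec (ξh₁ t)) + A₂.mulVec (ξ₂ t)) t) :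
    (∀ t : ℝ, HasDerivAt (fun s => ξ₁ s + P₁.mulVec (ξh₁ s))
      (A₁.mulVec (ξ₁ t + P₁.mulVec (ξh₁ t)) + (L₁ * Γ₂).mulVec (ξ₂ t)
        + B₁.mulVec (u₁ t)) t) ∧
    (∀ t : ℝ, HasDerivAt ξ₂
      ((L₂ * Γ₁).mulVec (ξ₁ t + P₁.mulVec (ξh₁ t)) + A₂.mulVec (ξ₂ t)) t) := by

  have hPB : ∀ v : Fin m₁ → ℝ, (P₁ * P₁d).mulVec (B₁.mulVec v) = B₁.mulVec v := by
    intro v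
    obtain ⟨w, hw⟩ := hB ⟨v, rfl⟩
    simp only [Matrix.mulVecLin_apply] at hw
    rw [← hw, Matrix.mulVec_mulVec, Matrix.mul_assoc, hleft, Matrix.mul_one]
  refine ⟨fun t => ?_, hdn₂⟩
  have hP : HasDerivAt (fun s => P₁.mulVec (ξh₁ s))
      (P₁.mulVec ((P₁d * A₁ * P₁).mulVec (ξh₁ t) + (P₁d * B₁).mulVec (u₁ t))) t := by
    exact (Matrix.mulVecLin P₁).toContinuousLinearMap.hasFDerivAt.comp_hasDerivAt t (hup t)
  have h := (hdn₁ t).add hP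
  refine HasDerivAt.congr_deriv h ?_
  symm
  simp only [Matrix.mulVec_add, Matrix.mulVec_mulVec]
  have key : P₁ * (P₁d * B₁) = B₁ := by
    rw [← Matrix.mul_assoc]
    ext i j
    have h2 := congrFun (hPB (Pi.single j 1)) i
    rw [Matrix.mulVec_mulVec] at h2
    simpa [Matrix.mulVec_single] using h2
  have key2 : P₁ * (P₁d * A₁ * P₁) + Pb₁ * Pb₁d * A₁ * P₁ = A₁ * P₁ := by
    rw [← Matrix.mul_assoc P₁, ← Matrix.mul_assoc P₁, ← Matrix.add_mul, ← Matrix.add_mul,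
      hproj, Matrix.one_mul]
  rw [key, ← key2]
  simp only [Matrix.add_mulVec, Matrix.mulVec_mulVec]
  abel
end

section
/- Stability part of Lemma 4. Let P₁ (n₁×n̂₁), P₁† (n̂₁×n₁), P̄₁ (n₁×(n₁−n̂₁)), P̄₁† ((n₁−n̂₁)×n₁) be real matrices with P₁†P₁ = I and P₁P₁† + P̄₁P̄₁† = I, and let K̂₁ be a real m₁×n̂₁ matrix. Suppose the block matrix A = [[A₁, L₁Γ₂],[L₂Γ₁, A₂]] is Hurwitz. Then the closed-loop matrix of the parameterized hierarchical realization under the local state feedback u₁ = K̂₁ξ̂₁, namely the block matrix (with state ordering (ξ̂₁, ξ₁, ξ₂)) M = [[P₁†A₁P₁ + P₁†B₁K̂₁, 0, 0],[P̄₁P̄₁†A₁P₁, A₁, L₁Γ₂],[L₂Γ₁P₁, L₂Γ₁, A₂]], is Hurwitz if and only if P₁†A₁P₁ + P₁†B₁K̂₁ is Hurwitz. -/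
open Matrix

lemma mem_spectrum_iff_isRoot_charpoly {n : Type*} [Fintype n] [DecidableEq n]
    (M : Matrix n n ℂ) (μ : ℂ) :
    μ ∈ spectrum ℂ M ↔ M.charpoly.IsRoot μ := by
  rw [spectrum.mem_iff, Matrix.isUnit_iff_isUnit_det, isUnit_iff_ne_zero, not_not,
    Polynomial.IsRoot.def]
  have : M.charpoly.eval μ = (algebraMap ℂ (Matrix n n ℂ) μ - M).det := by
    rw [Matrix.charpoly, eval_det, matPolyEquiv_charmatrix]
    simp [Matrix.scalar, Algebra.algebraMap_eq_smul_one, smul_eq_diagonal_mul]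
  rw [this]

/-- **Stability part of Lemma 4.** The closed-loop matrix of the parameterized hierarchical
realization under the local state feedback `u₁ = K̂₁ ξ̂₁` (state ordering `(ξ̂₁, ξ₁, ξ₂)`)
is Hurwitz iff `P₁†A₁P₁ + P₁†B₁K̂₁` is Hurwitz, provided `A` is Hurwitz. -/
theorem parameterized_hierarchical_stability
    {n₁ n₂ nh₁ m₁ m₂ q : ℕ}
    (A₁ : Matrix (Fin n₁) (Fin n₁) ℝ) (L₁ : Matrix (Fin n₁) (Fin m₂) ℝ)
    (B₁ : Matrix (Fin n₁) (Fin m₁) ℝ) (A₂ : Matrix (Fin n₂) (Fin n₂) ℝ)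
    (L₂ : Matrix (Fin n₂) (Fin q) ℝ) (Γ₁ : Matrix (Fin q) (Fin n₁) ℝ)
    (Γ₂ : Matrix (Fin m₂) (Fin n₂) ℝ)
    (P₁ : Matrix (Fin n₁) (Fin nh₁) ℝ) (P₁d : Matrix (Fin nh₁) (Fin n₁) ℝ)
    (Pb₁ : Matrix (Fin n₁) (Fin (n₁ - nh₁)) ℝ) (Pb₁d : Matrix (Fin (n₁ - nh₁)) (Fin n₁) ℝ)
    (Kh₁ : Matrix (Fin m₁) (Fin nh₁) ℝ)
    (hleft : P₁d * P₁ = 1)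
    (hproj : P₁ * P₁d + Pb₁ * Pb₁d = 1)
    (hA : IsHurwitz (fromBlocks A₁ (L₁ * Γ₂) (L₂ * Γ₁) A₂)) :
    IsHurwitz
      (fromBlocks (P₁d * A₁ * P₁ + P₁d * B₁ * Kh₁)
        (0 : Matrix (Fin nh₁) (Fin n₁ ⊕ Fin n₂) ℝ)
        (fromRows (Pb₁ * Pb₁d * A₁ * P₁) (L₂ * Γ₁ * P₁))
        (fromBlocks A₁ (L₁ * Γ₂) (L₂ * Γ₁) A₂))
    ↔ IsHurwitz (P₁d * A₁ * P₁ + P₁d * B₁ * Kh₁) := by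
  set X := P₁d * A₁ * P₁ + P₁d * B₁ * Kh₁ with hX
  set A := fromBlocks A₁ (L₁ * Γ₂) (L₂ * Γ₁) A₂ with hA'
  set C := fromRows (Pb₁ * Pb₁d * A₁ * P₁) (L₂ * Γ₁ * P₁) with hC
  have hmap : (fromBlocks X (0 : Matrix (Fin nh₁) (Fin n₁ ⊕ Fin n₂) ℝ) C A).map
      (Complex.ofReal) =
      fromBlocks (X.map Complex.ofReal) 0 (C.map Complex.ofReal) (A.map Complex.ofReal) := by
    rw [Matrix.fromBlocks_map]
    congr 1
  have key : ∀ μ : ℂ,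
      μ ∈ spectrum ℂ ((fromBlocks X (0 : Matrix (Fin nh₁) (Fin n₁ ⊕ Fin n₂) ℝ) C A).map
        Complex.ofReal) ↔
      μ ∈ spectrum ℂ (X.map Complex.ofReal) ∨ μ ∈ spectrum ℂ (A.map Complex.ofReal) := by
    intro μ
    rw [hmap, _root_.mem_spectrum_iff_isRoot_charpoly, _root_.mem_spectrum_iff_isRoot_charpoly,
      _root_.mem_spectrum_iff_isRoot_charpoly, Matrix.charpoly_fromBlocks_zero₁₂]
    simp [Polynomial.IsRoot.def, mul_eq_zero]
  constructor
  · intro h μ hμ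
    exact h μ ((key μ).2 (Or.inl hμ))
  · intro h μ hμ
    rcases (key μ).1 hμ with h1 | h2
    · exact h μ h1
    · exact hA μ h2
end

section
/- Coordinate transformation identity underlying Theorem 2 (equation (ctrans2)). Let P₁ (n₁×n̂₁), P₁† (n̂₁×n₁), P̄₁, P̄₁† be real matrices with P₁†P₁ = I, P₁P₁† + P̄₁P̄₁† = I, P₁P₁†B₁ = B₁, and P₁†L₁ = 0, and let K̂₁ be a real m₁×n̂₁ matrix. Define the block matrices (with state ordering (x₁, x₂, x̂₁)) T' = [[P̄₁P̄₁†, 0, P₁],[0, I, 0],[P₁†, 0, −I]] and S = [[I, 0, P₁],[0, I, 0],[P₁†, 0, 0]], the closed-loop matrix M_cl' = [[A₁ + B₁K̂₁P₁†, L₁Γ₂, −B₁K̂₁],[L₂Γ₁, A₂, 0],[P₁†A₁P̄₁P̄₁†, 0, P₁†A₁P₁]], and the cascade matrix (with state ordering (ξ₁, ξ₂, ξ̂₁)) M_cas' = [[A₁, L₁Γ₂, P̄₁P̄₁†A₁P₁],[L₂Γ₁, A₂, L₂Γ₁P₁],[0, 0, P₁†A₁P₁ + P₁†B₁K̂₁]].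 Then T'·S = I and S·T' = I (so T' is invertible with inverse S), and T' · M_cl' · S = M_cas'. -/
open Matrix


private lemma myFromColumns_add {m n₁ n₂ : Type*} (A₁ B₁ : Matrix m n₁ ℝ) (A₂ B₂ : Matrix m n₂ ℝ) :
    Matrix.fromCols A₁ A₂ + Matrix.fromCols B₁ B₂ = Matrix.fromCols (A₁ + B₁) (A₂ + B₂) := by
  ext i (j | j) <;> simp [Matrix.fromCols_apply_inl, Matrix.fromCols_apply_inr]

private lemma myFromRows_add {m₁ m₂ n : Type*} (A₁ B₁ : Matrix m₁ n ℝ) (A₂ B₂ : Matrix m₂ n ℝ) :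
    Matrix.fromRows A₁ A₂ + Matrix.fromRows B₁ B₂ = Matrix.fromRows (A₁ + B₁) (A₂ + B₂) := by
  ext (i | i) j <;> simp [Matrix.fromRows_apply_inl, Matrix.fromRows_apply_inr]

/-- **Coordinate transformation identity underlying Theorem 2 (equation (ctrans2)).** -/
theorem theorem2_similarity_identity
    {n₁ n₂ nh₁ m₁ m₂ q : ℕ}
    (A₁ : Matrix (Fin n₁) (Fin n₁) ℝ) (L₁ : Matrix (Fin n₁) (Fin m₂) ℝ)
    (B₁ : Matrix (Fin n₁) (Fin m₁) ℝ) (A₂ : Matrix (Fin n₂) (Fin n₂) ℝ)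
    (L₂ : Matrix (Fin n₂) (Fin q) ℝ) (Γ₁ : Matrix (Fin q) (Fin n₁) ℝ)
    (Γ₂ : Matrix (Fin m₂) (Fin n₂) ℝ)
    (P₁ : Matrix (Fin n₁) (Fin nh₁) ℝ) (P₁d : Matrix (Fin nh₁) (Fin n₁) ℝ)
    (Pb₁ : Matrix (Fin n₁) (Fin (n₁ - nh₁)) ℝ) (Pb₁d : Matrix (Fin (n₁ - nh₁)) (Fin n₁) ℝ)
    (Kh₁ : Matrix (Fin m₁) (Fin nh₁) ℝ)
    (hleft : P₁d * P₁ = 1)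
    (hproj : P₁ * P₁d + Pb₁ * Pb₁d = 1)
    (hB : P₁ * P₁d * B₁ = B₁)
    (hL : P₁d * L₁ = 0) :
    let T : Matrix (Fin n₁ ⊕ (Fin n₂ ⊕ Fin nh₁)) (Fin n₁ ⊕ (Fin n₂ ⊕ Fin nh₁)) ℝ :=
      fromBlocks (Pb₁ * Pb₁d)
        (fromCols (0 : Matrix (Fin n₁) (Fin n₂) ℝ) P₁)
        (fromRows (0 : Matrix (Fin n₂) (Fin n₁) ℝ) P₁d)
        (fromBlocks (1 : Matrix (Fin n₂) (Fin n₂) ℝ) (0 : Matrix (Fin n₂) (Fin nh₁) ℝ)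
          (0 : Matrix (Fin nh₁) (Fin n₂) ℝ) (-(1 : Matrix (Fin nh₁) (Fin nh₁) ℝ)));
    let S : Matrix (Fin n₁ ⊕ (Fin n₂ ⊕ Fin nh₁)) (Fin n₁ ⊕ (Fin n₂ ⊕ Fin nh₁)) ℝ :=
      fromBlocks (1 : Matrix (Fin n₁) (Fin n₁) ℝ)
        (fromCols (0 : Matrix (Fin n₁) (Fin n₂) ℝ) P₁)
        (fromRows (0 : Matrix (Fin n₂) (Fin n₁) ℝ) P₁d)
        (fromBlocks (1 : Matrix (Fin n₂) (Fin n₂) ℝ) (0 : Matrix (Fin n₂) (Fin nh₁) ℝ)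
          (0 : Matrix (Fin nh₁) (Fin n₂) ℝ) (0 : Matrix (Fin nh₁) (Fin nh₁) ℝ));
    let Mcl : Matrix (Fin n₁ ⊕ (Fin n₂ ⊕ Fin nh₁)) (Fin n₁ ⊕ (Fin n₂ ⊕ Fin nh₁)) ℝ :=
      fromBlocks (A₁ + B₁ * Kh₁ * P₁d) (fromCols (L₁ * Γ₂) (-(B₁ * Kh₁)))
        (fromRows (L₂ * Γ₁) (P₁d * A₁ * Pb₁ * Pb₁d))
        (fromBlocks A₂ (0 : Matrix (Fin n₂) (Fin nh₁) ℝ)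
          (0 : Matrix (Fin nh₁) (Fin n₂) ℝ) (P₁d * A₁ * P₁));
    let Mcas : Matrix (Fin n₁ ⊕ (Fin n₂ ⊕ Fin nh₁)) (Fin n₁ ⊕ (Fin n₂ ⊕ Fin nh₁)) ℝ :=
      fromBlocks A₁ (fromCols (L₁ * Γ₂) (Pb₁ * Pb₁d * A₁ * P₁))
        (fromRows (L₂ * Γ₁) (0 : Matrix (Fin nh₁) (Fin n₁) ℝ))
        (fromBlocks A₂ (L₂ * Γ₁ * P₁) (0 : Matrix (Fin nh₁) (Fin n₂) ℝ)
          (P₁d * A₁ * P₁ + P₁d * B₁ * Kh₁));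
    T * S = 1 ∧ S * T = 1 ∧ T * Mcl * S = Mcas := by
  intro T S Mcl Mcas
  have hQ : Pb₁ * Pb₁d = 1 - P₁ * P₁d := eq_sub_of_add_eq' hproj
  have hB' : P₁ * (P₁d * B₁) = B₁ := by rw [← Matrix.mul_assoc]; exact hB
  have hPd : P₁d * (P₁ * P₁d) = P₁d := by
    rw [← Matrix.mul_assoc, hleft, Matrix.one_mul]
  have hBK : P₁ * (P₁d * (B₁ * Kh₁)) = B₁ * Kh₁ := by
    rw [← Matrix.mul_assoc, ← Matrix.mul_assoc, Matrix.mul_assoc P₁ P₁d B₁, hB']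
  have hBK2 : P₁ * (P₁d * (B₁ * (Kh₁ * P₁d))) = B₁ * (Kh₁ * P₁d) := by
    rw [← Matrix.mul_assoc, ← Matrix.mul_assoc, Matrix.mul_assoc P₁ P₁d B₁, hB']
  have hLΓ : P₁d * (L₁ * Γ₂) = 0 := by rw [← Matrix.mul_assoc, hL, Matrix.zero_mul]
  have hQP' : Pb₁ * (Pb₁d * P₁) = 0 := by
    rw [← Matrix.mul_assoc, hQ, Matrix.sub_mul, Matrix.one_mul, Matrix.mul_assoc, hleft,
      Matrix.mul_one, sub_self]
  refine ⟨?_, ?_, ?_⟩ <;>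
  · show _ = _
    simp only [T, S, Mcl, Mcas, Matrix.fromBlocks_multiply, Matrix.fromCols_mul_fromRows,
      Matrix.fromCols_mul_fromBlocks, Matrix.fromBlocks_mul_fromRows,
      Matrix.mul_fromCols, Matrix.fromRows_mul, myFromColumns_add, myFromRows_add,
      Matrix.fromCols_fromRows_eq_fromBlocks, Matrix.fromBlocks_add, ← Matrix.fromBlocks_one]
    simp only [hQ]
    simp only [Matrix.fromBlocks_inj, Matrix.fromCols_ext_iff, Matrix.fromRows_ext_iff]
    repeat' apply And.intro
    all_goals simp [Matrix.mul_sub, Matrix.sub_mul, Matrix.mul_add, Matrix.add_mul,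
      Matrix.mul_assoc, hleft, hB', hL, hPd, hLΓ, hQP', hQ, hBK, hBK2]
    all_goals try abel
end

section
/- Zero control action of the retrofit controller under zero local initial conditions (Section 3.3.2). Let K₁ be a real m₁×p₁ matrix and let (x₁, x₂, x̂₁) : ℝ → ℝ^{n₁} × ℝ^{n₂} × ℝ^{n₁} be differentiable functions solving the closed-loop system x₁' = A₁x₁ + L₁Γ₂x₂ + B₁K₁(C₁x₁ − C₁x̂₁), x₂' = L₂Γ₁x₁ + A₂x₂, x̂₁' = A₁x̂₁ + L₁Γ₂x₂ with x₁(0) = 0 and x̂₁(0) = 0, and with arbitrary x₂(0). Then x̂₁(t) = x₁(t) for all t ≥ 0, and consequently the control input u₁(t) = K₁(C₁x₁(t) − C₁x̂₁(t)) is identically zero for all t ≥ 0. -/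
open Matrix

/-- **Zero control action of the retrofit controller under zero local initial conditions
(Section 3.3.2).** If `x₁(0) = 0` and `x̂₁(0) = 0` then `x̂₁ ≡ x₁` on `[0, ∞)` and the
retrofit control input `u₁ = K₁(C₁x₁ − C₁x̂₁)` is identically zero there. -/
theorem retrofit_zero_control_action
    {n₁ n₂ m₁ m₂ q p₁ : ℕ}
    (A₁ : Matrix (Fin n₁) (Fin n₁) ℝ) (L₁ : Matrix (Fin n₁) (Fin m₂) ℝ)
    (B₁ : Matrix (Fin n₁) (Fin m₁) ℝ) (C₁ : Matrix (Fin p₁) (Fin n₁) ℝ)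
    (A₂ : Matrix (Fin n₂) (Fin n₂) ℝ) (L₂ : Matrix (Fin n₂) (Fin q) ℝ)
    (Γ₁ : Matrix (Fin q) (Fin n₁) ℝ) (Γ₂ : Matrix (Fin m₂) (Fin n₂) ℝ)
    (K₁ : Matrix (Fin m₁) (Fin p₁) ℝ)
    (x₁ xh₁ : ℝ → Fin n₁ → ℝ) (x₂ : ℝ → Fin n₂ → ℝ)
    (hx₁ : ∀ t : ℝ, HasDerivAt x₁
      (A₁.mulVec (x₁ t) + (L₁ * Γ₂).mulVec (x₂ t)
        + (B₁ * K₁).mulVec (C₁.mulVec (x₁ t) - C₁.mulVec (xh₁ t))) t)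
    (hx₂ : ∀ t : ℝ, HasDerivAt x₂
      ((L₂ * Γ₁).mulVec (x₁ t) + A₂.mulVec (x₂ t)) t)
    (hxh₁ : ∀ t : ℝ, HasDerivAt xh₁
      (A₁.mulVec (xh₁ t) + (L₁ * Γ₂).mulVec (x₂ t)) t)
    (hx₁0 : x₁ 0 = 0) (hxh₁0 : xh₁ 0 = 0) :
    ∀ t : ℝ, 0 ≤ t →
      xh₁ t = x₁ t ∧ K₁.mulVec (C₁.mulVec (x₁ t) - C₁.mulVec (xh₁ t)) = 0 := by
  -- error dynamics: e = x₁ - xh₁ satisfies e' = M e with M = A₁ + B₁K₁C₁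
  set M : Matrix (Fin n₁) (Fin n₁) ℝ := A₁ + B₁ * K₁ * C₁ with hM
  set e : ℝ → Fin n₁ → ℝ := fun t => x₁ t - xh₁ t with he
  have hder : ∀ t : ℝ, HasDerivAt e (M.mulVec (e t)) t := by
    intro t
    have h : HasDerivAt e _ t := (hx₁ t).sub (hxh₁ t)
    convert h using 1
    simp only [he, hM]
    rw [Matrix.add_mulVec, Matrix.mul_assoc B₁ K₁ C₁]
    simp only [Matrix.mulVec_sub, Matrix.mulVec_mulVec]
    simp only [Matrix.mul_assoc]
    abel
  -- M.mulVec is Lipschitz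
  let F : (Fin n₁ → ℝ) →L[ℝ] (Fin n₁ → ℝ) := LinearMap.toContinuousLinearMap M.mulVecLin
  have key : ∀ t : ℝ, 0 ≤ t → e t = 0 := by
    intro t ht
    have := ODE_solution_unique (v := fun _ y => F y) (K := ‖F‖₊)
      (f := e) (g := fun _ => 0) (a := 0) (b := t)
      (fun _ => F.lipschitz)
      (fun s _ => (hder s).continuousAt.continuousWithinAt)
      (fun s _ => ((hder s).hasDerivWithinAt))
      continuousOn_const
      (fun s _ => by simpa using (hasDerivAt_const s (0 : Fin n₁ → ℝ)).hasDerivWithinAt)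
      (by simp [he, hx₁0, hxh₁0])
    exact this (Set.mem_Icc.2 ⟨ht, le_refl t⟩)
  intro t ht
  have h0 : x₁ t = xh₁ t := by
    have := key t ht
    simpa [he, sub_eq_zero] using this
  refine ⟨h0.symm, ?_⟩
  rw [h0]
  simp
end
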